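/- Let D be a fixed deduction system and S a constraint system. If a ground substitution σ with dom(σ) = vars(S) is a solution of S, then there exist a derivation D and a mapping α such that D is a proof of σ ⊨ S (i.e., D,σ,α ⊢ S). -/

import Mathlib

/-! ### Terms -/

/-- First-order terms: variables, ordinary constants, nonces (an infinite
subset of the constants), and function applications. -/
inductive Term : Type
  | var : ℕ → Term
  | cst : ℕ → Term
  | nonce : ℕ → Term
  | func : ℕ → List Term → Term

namespace Term

/-- The subterm relation. -/
inductive IsSubterm : Term → Term → Prop
  | refl (t : Term) : IsSubterm t t
  | func {s t : Term} {f : ℕ} {args : List Term} :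
      t ∈ args → IsSubterm s t → IsSubterm s (func f args)

/-- The set of subterms of a term. -/
def sub (t : Term) : Set Term := {s | IsSubterm s t}

/-- The set of (indices of) variables of a term. -/
def varsSet (t : Term) : Set ℕ := {x | IsSubterm (var x) t}

/-- A term is ground if it has no variables. -/
def Ground (t : Term) : Prop := varsSet t = ∅

/-- The term is a variable. -/
def IsVar : Term → Prop
  | var _ => True
  | _ => False

/-- Application of a substitution to a term. -/
noncomputable def subst (σ : ℕ → Term) : Term → Term
  | var x => σ x
  | cst c => cst c
  | nonce n => nonce n
  | func f args => func f (args.attach.map (fun a => Term.subst σ a.1))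
decreasing_by
  have := List.sizeOf_lt_of_mem a.2
  simp only [Term.func.sizeOf_spec]
  omega

/-- The function symbol `f` occurs in the term `t`. -/
def OccursFun (f : ℕ) (t : Term) : Prop := ∃ args, IsSubterm (func f args) t

end Term

/-! ### Substitutions -/

/-- Substitutions (maps from variables to terms). -/
abbrev Subst := ℕ → Term

namespace Subst

/-- The domain of a substitution. -/
def dom (σ : Subst) : Set ℕ := {x | σ x ≠ .var x}

/-- The image of a substitution. -/
def img (σ : Subst) : Set Term := {t | ∃ x ∈ dom σ, σ x = t}

/-- Idempotency of a substitution. -/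
def Idem (σ : Subst) : Prop := ∀ x, (σ x).subst σ = σ x

/-- A substitution is ground if its image consists of ground terms. -/
def IsGround (σ : Subst) : Prop := ∀ x ∈ dom σ, (σ x).Ground

open Classical in
/-- Union of two substitutions (intended for disjoint domains). -/
noncomputable def union (σ τ : Subst) : Subst := fun x =>
  if σ x = Term.var x then τ x else σ x

end Subst

/-- Subterms of a set of terms. -/
def subT (T : Set Term) : Set Term := {s | ∃ t ∈ T, Term.IsSubterm s t}

/-- Variables of a set of terms. -/
def varsT (T : Set Term) : Set ℕ := {x | ∃ t ∈ T, Term.IsSubterm (.var x) t}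

/-- DAG size of a set of terms: number of its subterms. -/
noncomputable def sizeT (T : Set Term) : ℕ := (subT T).ncard

/-- Size of a substitution: DAG size of its image. -/
noncomputable def sizeSubst (σ : Subst) : ℕ := sizeT σ.img

/-! ### Deduction systems, steps and derivations -/

/-- A deduction system: a finite set of (standard) deduction rules, each rule
being a pair (left-hand sides, right-hand side) whose right-hand-side variables
occur in the left-hand sides.  Nonce-creation rules and reception rules are
built into the notions of steps/derivations below. -/
structure DeductionSystem where
  rules : Set (List Term × Term)
  finite : rules.Finite
  wf : ∀ p ∈ rules, p.2.varsSet ⊆ varsT {u | u ∈ p.1}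

/-- A step of a derivation: a reception `? → t` or a standard deduction `l → r`
(nonce creations are standard deductions with empty left-hand side). -/
inductive Step
  | recv : Term → Step
  | std : List Term → Term → Step

namespace Step

/-- Right-hand side of a step. -/
def rhs : Step → Term
  | recv t => t
  | std _ r => r

/-- All terms occurring in the step. -/
def terms : Step → Set Term
  | recv t => {t}
  | std l r => {r} ∪ {u | u ∈ l}

end Step

/-- The set of right-hand sides of the first `k` steps of `D`. -/
def RHSset (D : List Step) (k : ℕ) : Set Term :=
  {r | ∃ j < k, ∃ s, D[j]? = some s ∧ s.rhs = r}

/-- A step is a deduction of the system `DS`: a reception of a ground term, a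
nonce creation, or a ground instance of a (standard) rule of `DS`. -/
def IsDeduction (DS : DeductionSystem) (s : Step) : Prop :=
  match s with
  | .recv t => t.Ground
  | .std l r =>
      (∀ u ∈ l, u.Ground) ∧ r.Ground ∧
        ((l = [] ∧ ∃ n, r = Term.nonce n) ∨
          ∃ p ∈ DS.rules, ∃ σ : Subst,
            l = p.1.map (Term.subst σ) ∧ r = p.2.subst σ)

/-- A derivation: a sequence of deductions in which the left-hand side of every
standard step has already been deduced. -/
def IsDerivation (DS : DeductionSystem) (D : List Step) : Prop :=
  (∀ s ∈ D, IsDeduction DS s) ∧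
  ∀ (i : ℕ) (l : List Term) (r : Term), D[i]? = some (Step.std l r) → ∀ u ∈ l, u ∈ RHSset D i

/-- The position of the first reception of `D` at index `≥ k` (or `|D|` if
there is none): (0-indexed version of) `Next(D, ·)`. -/
noncomputable def nextRecv (D : List Step) (k : ℕ) : ℕ :=
  sInf ({D.length} ∪ {j | k ≤ j ∧ ∃ t, D[j]? = some (Step.recv t)})

/-- `Der DS K`: the set of ground terms derivable from the knowledge `K`. -/
def Der (DS : DeductionSystem) (K : Set Term) : Set Term :=
  {t | ∃ D : List Step, IsDerivation DS D ∧
        (∀ (j : ℕ) (u : Term), D[j]? = some (Step.recv u) → u ∈ K) ∧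
        ∃ l, D.getLast? = some (Step.std l t)}

/-- No term is deduced twice in `D` by a standard rule. -/
def NoDuplicateStd (D : List Step) : Prop :=
  ∀ (i j : ℕ) (li lj : List Term) (r : Term), D[i]? = some (Step.std li r) → D[j]? = some (Step.std lj r) → i = j

/-- `(T,σ)`-maximality of a derivation. -/
def MaximalDeriv (DS : DeductionSystem) (T : Set Term) (σ : Subst) (D : List Step) : Prop :=
  ∀ t ∈ subT T, ∀ k ≤ D.length,
    t.subst σ ∈ Der DS (RHSset D k) → t.subst σ ∈ RHSset D (nextRecv D k)

/-! ### Constraint systems -/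

/-- A constraint: a reception `?t`, an emission `!t` or a negative
constraint `♮t`. -/
inductive Constraint
  | recv : Term → Constraint
  | send : Term → Constraint
  | neg : Term → Constraint

namespace Constraint

/-- The term of a constraint. -/
def term : Constraint → Term
  | recv t => t
  | send t => t
  | neg t => t

/-- The constraint is a send constraint. -/
def isSend : Constraint → Bool
  | send _ => true
  | _ => false

/-- Apply a substitution to a constraint. -/
noncomputable def map (θ : Subst) : Constraint → Constraint
  | recv t => recv (t.subst θ)
  | send t => send (t.subst θ)
  | neg t => neg (t.subst θ)

end Constraint

/-- A (pre-)constraint system is a finite sequence of constraints. -/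
abbrev CSystem := List Constraint

/-- The terms of a constraint system. -/
def csTerms (S : CSystem) : Set Term := {t | ∃ c ∈ S, c.term = t}

/-- `Sub(S)`. -/
def csSub (S : CSystem) : Set Term := subT (csTerms S)

/-- `vars(S)`. -/
def csVars (S : CSystem) : Set ℕ := varsT (csTerms S)

/-- `|Sub(S)|`. -/
noncomputable def csSize (S : CSystem) : ℕ := sizeT (csTerms S)

/-- Apply a substitution to all constraints of a system. -/
noncomputable def csSubst (S : CSystem) (θ : Subst) : CSystem := S.map (Constraint.map θ)

/-- Origination and determination: `S` is a genuine constraint system. -/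
def IsCS (S : CSystem) : Prop :=
  (∀ (i : ℕ) (t : Term), S[i]? = some (Constraint.send t) →
      t.varsSet ⊆ {x | ∃ j < i, ∃ u : Term, S[j]? = some (Constraint.recv u) ∧ x ∈ u.varsSet}) ∧
  (∀ (i : ℕ) (t : Term), S[i]? = some (Constraint.neg t) →
      t.varsSet ⊆ {x | ∃ (j : ℕ) (u : Term), S[j]? = some (Constraint.recv u) ∧ x ∈ u.varsSet})

/-- The knowledge produced by the send constraints up to (and including) index
`i`, instantiated by `σ` (this is `{tⱼσ : j ≤ prev(i), S[j] = !tⱼ}`). -/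
def knowledge (S : CSystem) (σ : Subst) (i : ℕ) : Set Term :=
  {u | ∃ j ≤ i, ∃ t, S[j]? = some (Constraint.send t) ∧ u = t.subst σ}

/-- A solution of a constraint system. -/
structure IsSolution (DS : DeductionSystem) (S : CSystem) (σ : Subst) : Prop where
  ground : σ.IsGround
  idem : σ.Idem
  dom_eq : σ.dom = csVars S
  recv_mem : ∀ (i : ℕ) (t : Term), S[i]? = some (Constraint.recv t) → t.subst σ ∈ Der DS (knowledge S σ i)
  neg_not_mem : ∀ (i : ℕ) (t : Term), S[i]? = some (Constraint.neg t) → t.subst σ ∉ Der DS (knowledge S σ i)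

/-- `prev(i)`: the last send index `≤ i` of `S`, if any. -/
def prevSend (S : CSystem) (i : ℕ) : Option ℕ :=
  ((List.range (i + 1)).filter (fun j => ((S[j]?).map Constraint.isSend).getD false)).max?

/-- `(S,σ)`-compliance of a derivation `D` with the mapping `α`: `α` is a
strictly increasing bijection from the send indices of `S` onto the reception
positions of `D`, sending `!t` to the reception `? → tσ`. -/
structure Compliant (S : CSystem) (σ : Subst) (D : List Step) (α : ℕ → ℕ) : Prop where
  mono : ∀ (i j : ℕ) (ti tj : Term), S[i]? = some (Constraint.send ti) →
    S[j]? = some (Constraint.send tj) → i < j → α i < α j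
  maps : ∀ (i : ℕ) (t : Term), S[i]? = some (Constraint.send t) →
    D[α i]? = some (Step.recv (t.subst σ))
  surj : ∀ (j : ℕ) (u : Term), D[j]? = some (Step.recv u) →
    ∃ i t, S[i]? = some (Constraint.send t) ∧ α i = j

/-- Position in `D` of the first reception strictly after the reception
corresponding (via `α`) to the last send constraint `≤ i` of `S` (or the first
reception of `D` if there is no such send): this is `Next(D, α(prev(i)))`. -/
noncomputable def cutoff (S : CSystem) (D : List Step) (α : ℕ → ℕ) (i : ℕ) : ℕ :=
  match prevSend S i with
  | none => nextRecv D 0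
  | some p => nextRecv D (α p + 1)

/-- `D, σ, α ⊢ S`: the derivation `D` is a proof of `σ ⊨ S`. -/
structure IsProof (DS : DeductionSystem) (S : CSystem) (σ : Subst)
    (D : List Step) (α : ℕ → ℕ) : Prop where
  deriv : IsDerivation DS D
  compliant : Compliant S σ D α
  recv_proved : ∀ (i : ℕ) (t : Term), S[i]? = some (Constraint.recv t) →
    ∃ j < cutoff S D α i, ∃ s, D[j]? = some s ∧ s.rhs = t.subst σ
  neg_not_mem : ∀ (i : ℕ) (t : Term), S[i]? = some (Constraint.neg t) →
    t.subst σ ∉ Der DS (knowledge S σ i)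

/-! ### Subterm deduction systems -/

/-- A composition rule: `x₁,…,xₙ → f(x₁,…,xₙ)` with pairwise distinct
variables `xᵢ`. -/
def IsCompRule (p : List Term × Term) : Prop :=
  ∃ (f : ℕ) (xs : List ℕ), xs.Nodup ∧ p.1 = xs.map Term.var ∧
    p.2 = Term.func f (xs.map Term.var)

/-- A decomposition rule: the right-hand side is a subterm of a left-hand
side. -/
def IsDecompRule (p : List Term × Term) : Prop :=
  ∃ l ∈ p.1, p.2 ∈ l.sub

/-- A subterm deduction system: every standard rule is a composition or a
decomposition rule. -/
def SubtermSystem (DS : DeductionSystem) : Prop :=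
  ∀ p ∈ DS.rules, IsCompRule p ∨ IsDecompRule p

/-- A step is a composition: a reception, a nonce creation, or an instance of
a composition rule of `DS`. -/
def IsCompositionStep (DS : DeductionSystem) (s : Step) : Prop :=
  match s with
  | .recv _ => True
  | .std l r =>
      (l = [] ∧ ∃ n, r = Term.nonce n) ∨
        ∃ p ∈ DS.rules, IsCompRule p ∧
          ∃ σ : Subst, l = p.1.map (Term.subst σ) ∧ r = p.2.subst σ

/-- `l → r` is an instance (not necessarily ground) of a standard deduction
rule of the system. -/
def StdRuleInstance (DS : DeductionSystem) (l : List Term) (r : Term) : Prop :=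
  (l = [] ∧ ∃ n, r = Term.nonce n) ∨
    ∃ p ∈ DS.rules, ∃ σ : Subst, l = p.1.map (Term.subst σ) ∧ r = p.2.subst σ

/-- DAG size of a rule. -/
noncomputable def ruleSize (p : List Term × Term) : ℕ :=
  sizeT ({p.2} ∪ {u | u ∈ p.1})

/-- Maximal size of a decomposition rule of the system. -/
noncomputable def maxDecompSize (DS : DeductionSystem) : ℕ :=
  sSup {n | ∃ p ∈ DS.rules, IsDecompRule p ∧ ruleSize p = n}

/-! ### Localization -/

/-- `T` localizes the derivation `D` for `σ`. -/
def Localizes (DS : DeductionSystem) (T : Set Term) (σ : Subst) (D : List Step) : Prop :=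
  ∀ (i : ℕ) (l : List Term) (r : Term), D[i]? = some (Step.std l r) →
    ∀ t ∈ subT T, ¬ t.IsVar → t.subst σ = r →
      ∃ ts : List Term, (∀ u ∈ ts, u ∈ subT T) ∧
        (∀ u ∈ ts, u.subst σ ∈ RHSset D i) ∧ StdRuleInstance DS ts t

/-- `T` one-to-one localizes `D` for `σ`. -/
def OneToOneLocalizes (DS : DeductionSystem) (T : Set Term) (σ : Subst)
    (D : List Step) : Prop :=
  Localizes DS T σ D ∧ Set.InjOn (Term.subst σ) (subT T)

/-! ### Terms of a derivation, `Out(S)` -/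

/-- The terms occurring in a derivation. -/
def derTerms (D : List Step) : Set Term := {t | ∃ s ∈ D, t ∈ s.terms}

/-- `Sub(D)`. -/
def subD (D : List Step) : Set Term := subT (derTerms D)

/-- The terms of the send constraints of `S`. -/
def outTerms (S : CSystem) : Set Term := {t | Constraint.send t ∈ S}

/-! ### Milestone sequences -/

/-- An element of a milestone sequence: `→ t` or `? → t`. -/
inductive MStep
  | ded : Term → MStep
  | recvm : Term → MStep

/-- The term of a milestone element. -/
def MStep.term : MStep → Term
  | ded t => t
  | recvm t => t

/-- `M` is a milestone candidate sequence of `D` for `(T,σ)`. -/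
def IsMilestoneOf (T : Set Term) (σ : Subst) (D : List Step) (M : List MStep) : Prop :=
  (∀ m ∈ M, m.term ∈ subT T) ∧
  ∃ α : ℕ → ℕ, (∀ i j, i < j → j < M.length → α i < α j) ∧
    ∀ (i : ℕ) (m : MStep), M[i]? = some m →
      match m with
      | MStep.recvm t => D[α i]? = some (Step.recv (t.subst σ))
      | MStep.ded t => ∃ l, D[α i]? = some (Step.std l (t.subst σ))

/-- `M` is the `(T,σ)`-milestone sequence of `D`: a candidate of maximal
length. -/
def IsMilestoneSeq (T : Set Term) (σ : Subst) (D : List Step) (M : List MStep) : Prop :=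
  IsMilestoneOf T σ D M ∧ ∀ M', IsMilestoneOf T σ D M' → M'.length ≤ M.length

/-! ### Free pairing symbol -/

/-- `f` occurs in the rule `p`. -/
def OccursInRule (f : ℕ) (p : List Term × Term) : Prop :=
  (∃ t ∈ p.1, t.OccursFun f) ∨ p.2.OccursFun f

/-- The system contains a composition rule `x₁, x₂ → f(x₁,x₂)` where the
binary symbol `f` occurs in no other rule. -/
def FreePairing (DS : DeductionSystem) : Prop :=
  ∃ (f x₁ x₂ : ℕ), x₁ ≠ x₂ ∧
    ([Term.var x₁, Term.var x₂], Term.func f [Term.var x₁, Term.var x₂]) ∈ DS.rules ∧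
    ∀ p ∈ DS.rules, OccursInRule f p →
      p = ([Term.var x₁, Term.var x₂], Term.func f [Term.var x₁, Term.var x₂])

/-! ### Unification -/

/-- `σ` is a unifier of the unification system `U`. -/
def IsUnifier (U : Set (Term × Term)) (σ : Subst) : Prop :=
  ∀ pq ∈ U, Term.subst σ pq.1 = Term.subst σ pq.2

/-- `θ` is a most general unifier of `U`. -/
def IsMGU (U : Set (Term × Term)) (θ : Subst) : Prop :=
  IsUnifier U θ ∧ ∀ σ, IsUnifier U σ → ∃ τ : Subst, ∀ x, σ x = (θ x).subst τ

/-- The terms of a unification system. -/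
def unifTerms (U : Set (Term × Term)) : Set Term :=
  {t | ∃ pq ∈ U, t = pq.1 ∨ t = pq.2}

/-- The variables of a unification system. -/
def unifVars (U : Set (Term × Term)) : Set ℕ := varsT (unifTerms U)
section Aux

theorem subterm_subst_var (σ : Subst) : ∀ (t : Term) (x : ℕ),
    Term.IsSubterm (.var x) (t.subst σ) →
    ∃ y, Term.IsSubterm (.var y) t ∧ Term.IsSubterm (.var x) (σ y)
  | .var z, x, h => ⟨z, .refl _, by simpa [Term.subst] using h⟩
  | .cst c, x, h => by simp only [Term.subst] at h; cases h
  | .nonce n, x, h => by simp only [Term.subst] at h; cases h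
  | .func f args, x, h => by
    simp only [Term.subst] at h
    cases h with
    | func hmem hsub =>
      rename_i t'
      rcases List.mem_map.mp hmem with ⟨a, ha, rfl⟩
      have hlt := List.sizeOf_lt_of_mem a.2
      obtain ⟨y, hy, hxy⟩ := subterm_subst_var σ a.1 x hsub
      exact ⟨y, .func a.2 hy, hxy⟩
termination_by t => sizeOf t
decreasing_by
  simp only [Term.func.sizeOf_spec]; omega

theorem ground_subst (σ : Subst) (hσ : σ.IsGround) (t : Term)
    (h : ∀ y, Term.IsSubterm (.var y) t → y ∈ σ.dom) : (t.subst σ).Ground := by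
  rw [Term.Ground, Set.eq_empty_iff_forall_notMem]
  intro x hx
  obtain ⟨y, hy, hxy⟩ := subterm_subst_var σ t x hx
  have hyd := h y hy
  have := hσ y hyd
  rw [Term.Ground, Set.eq_empty_iff_forall_notMem] at this
  exact this x hxy

end Aux
section Aux2

theorem RHSset_mono (D : List Step) {k k' : ℕ} (h : k ≤ k') : RHSset D k ⊆ RHSset D k' := by
  rintro r ⟨j, hj, s, hs, hrhs⟩
  exact ⟨j, lt_of_lt_of_le hj h, s, hs, hrhs⟩

theorem RHSset_append (D E : List Step) {k : ℕ} (h : k ≤ D.length) :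
    RHSset (D ++ E) k = RHSset D k := by
  ext r
  constructor <;> rintro ⟨j, hj, s, hs, hrhs⟩ <;>
    refine ⟨j, hj, s, ?_, hrhs⟩
  · rwa [List.getElem?_append_left (lt_of_lt_of_le hj h)] at hs
  · rwa [List.getElem?_append_left (lt_of_lt_of_le hj h)]

theorem mem_RHSset {D : List Step} {j k : ℕ} {s : Step} (hs : D[j]? = some s) (hj : j < k) :
    s.rhs ∈ RHSset D k := ⟨j, hj, s, hs, rfl⟩

theorem IsDerivation.prefix {DS : DeductionSystem} {D E : List Step}
    (h : IsDerivation DS (D ++ E)) : IsDerivation DS D := by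
  constructor
  · exact fun s hs => h.1 s (List.mem_append_left E hs)
  · intro i l r hi u hu
    have hilt : i < D.length := (List.getElem?_eq_some_iff.mp hi).1
    have : (D ++ E)[i]? = some (Step.std l r) := by
      rwa [List.getElem?_append_left hilt]
    obtain ⟨j, hj, s, hs, hrhs⟩ := h.2 i l r this u hu
    refine ⟨j, hj, s, ?_, hrhs⟩
    rwa [List.getElem?_append_left (hj.trans hilt)] at hs

theorem IsDerivation.snoc {DS : DeductionSystem} {D : List Step} {s : Step}
    (h : IsDerivation DS D) (hded : IsDeduction DS s)
    (hlhs : ∀ l r, s = .std l r → ∀ u ∈ l, u ∈ RHSset D D.length) :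
    IsDerivation DS (D ++ [s]) := by
  constructor
  · intro s' hs'
    rcases List.mem_append.mp hs' with h' | h'
    · exact h.1 s' h'
    · rw [List.mem_singleton] at h'; subst h'; exact hded
  · intro i l r hi u hu
    rcases lt_or_ge i D.length with hilt | hige
    · rw [List.getElem?_append_left hilt] at hi
      obtain ⟨j, hj, s', hs', hrhs⟩ := h.2 i l r hi u hu
      refine ⟨j, hj, s', ?_, hrhs⟩
      rwa [List.getElem?_append_left (hj.trans hilt)]
    · have hi' : i = D.length := by
        have := (List.getElem?_eq_some_iff.mp hi).1
        simp only [List.length_append, List.length_singleton] at this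
        omega
      subst hi'
      rw [List.getElem?_concat_length] at hi
      have hs : s = Step.std l r := Option.some.inj hi
      have := hlhs l r hs u hu
      rw [← RHSset_append D [s] (le_refl _)] at this
      exact this

end Aux2
section Aux3

theorem nextRecv_le (D : List Step) (k : ℕ) : nextRecv D k ≤ D.length :=
  Nat.sInf_le (Or.inl rfl)

theorem nextRecv_eq_length {D : List Step} {k : ℕ}
    (h : ∀ j u, k ≤ j → D[j]? = some (Step.recv u) → False) : nextRecv D k = D.length := by
  refine le_antisymm (nextRecv_le D k) ?_
  have hne : ({D.length} ∪ {j | k ≤ j ∧ ∃ t, D[j]? = some (Step.recv t)} : Set ℕ).Nonempty :=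
    ⟨D.length, Or.inl rfl⟩
  rcases Nat.sInf_mem hne with h' | h'
  · exact le_of_eq h'.symm
  · exact absurd h'.2 (fun ⟨u, hu⟩ => h _ u h'.1 hu)

theorem nextRecv_append_le (D E : List Step) (k : ℕ) :
    nextRecv D k ≤ nextRecv (D ++ E) k := by
  have hne : ({(D ++ E).length} ∪ {j | k ≤ j ∧ ∃ t, (D ++ E)[j]? = some (Step.recv t)} : Set ℕ).Nonempty :=
    ⟨(D ++ E).length, Or.inl rfl⟩
  rcases Nat.sInf_mem hne with h' | h'
  · have he : nextRecv (D ++ E) k = (D ++ E).length := h'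
    rw [he]
    exact le_trans (nextRecv_le D k) (by simp)
  · rcases lt_or_ge (nextRecv (D ++ E) k) D.length with hlt | hge
    · refine Nat.sInf_le (Or.inr ⟨h'.1, ?_⟩)
      obtain ⟨t, ht⟩ := h'.2
      have ht' : (D ++ E)[nextRecv (D ++ E) k]? = some (Step.recv t) := ht
      exact ⟨t, by rwa [List.getElem?_append_left hlt] at ht'⟩
    · exact le_trans (nextRecv_le D k) hge

/-- Keep only the standard steps. -/
def stdOnly (D : List Step) : List Step :=
  D.filter fun s => match s with | .recv _ => false | .std _ _ => true

theorem stdOnly_no_recv {D : List Step} {j : ℕ} {u : Term}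
    (h : (stdOnly D)[j]? = some (Step.recv u)) : False := by
  have hmem : Step.recv u ∈ stdOnly D := by
    obtain ⟨hlt, heq⟩ := List.getElem?_eq_some_iff.mp h
    exact heq ▸ List.getElem_mem hlt
  have := List.of_mem_filter hmem
  simp at this

theorem prevSend_spec {S : CSystem} {i p : ℕ} (h : prevSend S i = some p) :
    p ≤ i ∧ (∃ t, S[p]? = some (Constraint.send t)) ∧
      ∀ j ≤ i, (∀ t, S[j]? = some (Constraint.send t) → j ≤ p) := by
  rw [prevSend] at h
  rw [List.max?_eq_some_iff] at h
  obtain ⟨hmem, hmax⟩ := h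
  rw [List.mem_filter, List.mem_range] at hmem
  refine ⟨by omega, ?_, ?_⟩
  · rcases hS : S[p]? with _ | c
    · simp [hS] at hmem
    · cases c <;> simp [hS, Constraint.isSend] at hmem ⊢
  · intro j hj t hjt
    exact hmax j (by rw [List.mem_filter, List.mem_range]; exact ⟨by omega, by simp [hjt, Constraint.isSend]⟩)

theorem prevSend_of_send {S : CSystem} {j i : ℕ} {t : Term}
    (hj : S[j]? = some (Constraint.send t)) (hji : j ≤ i) :
    ∃ p, prevSend S i = some p := by
  cases hp : prevSend S i with
  | some p => exact ⟨p, rfl⟩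
  | none =>
    rw [prevSend, List.max?_eq_none_iff] at hp
    have : j ∈ (List.range (i + 1)).filter (fun j => ((S[j]?).map Constraint.isSend).getD false) := by
      rw [List.mem_filter, List.mem_range]
      exact ⟨by omega, by simp [hj, Constraint.isSend]⟩
    rw [hp] at this
    cases this

theorem prevSend_append {S : CSystem} (c : Constraint) {i : ℕ} (hi : i < S.length) :
    prevSend (S ++ [c]) i = prevSend S i := by
  rw [prevSend, prevSend]
  congr 1
  apply List.filter_congr
  intro j hj
  rw [List.mem_range] at hj
  rw [List.getElem?_append_left (by omega)]

end Aux3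
section Aux4

theorem graft (DS : DeductionSystem) (D₀ : List Step) (K : Set Term)
    (hK : ∀ u ∈ K, u ∈ RHSset D₀ D₀.length) (hD₀ : IsDerivation DS D₀) :
    ∀ W : List Step, IsDerivation DS W → (∀ (j : ℕ) (u : Term), W[j]? = some (Step.recv u) → u ∈ K) →
      IsDerivation DS (D₀ ++ stdOnly W) ∧
        ∀ (j : ℕ) (s : Step), W[j]? = some s →
          s.rhs ∈ RHSset (D₀ ++ stdOnly W) (D₀ ++ stdOnly W).length := by
  intro W
  induction W using List.reverseRecOn with
  | nil =>
    intro _ _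
    refine ⟨by simpa [stdOnly] using hD₀, ?_⟩
    intro j s hs
    simp at hs
  | append_singleton W' s ih =>
    intro hW hrecv
    have hW' : IsDerivation DS W' := hW.prefix
    have hrecv' : ∀ (j : ℕ) (u : Term), W'[j]? = some (Step.recv u) → u ∈ K := by
      intro j u hj
      have hjlt : j < W'.length := (List.getElem?_eq_some_iff.mp hj).1
      exact hrecv j u (by rwa [List.getElem?_append_left hjlt])
    obtain ⟨hD1, hR1⟩ := ih hW' hrecv'
    have hsW : s ∈ W' ++ [s] := List.mem_append_right W' (List.mem_singleton_self s)
    have hslast : (W' ++ [s])[W'.length]? = some s := List.getElem?_concat_length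
    cases s with
    | recv u =>
      have hstd : stdOnly (W' ++ [Step.recv u]) = stdOnly W' := by
        simp [stdOnly, List.filter_append]
      rw [hstd]
      refine ⟨hD1, ?_⟩
      intro j s' hj
      rcases lt_or_ge j W'.length with hjlt | hjge
      · rw [List.getElem?_append_left hjlt] at hj
        exact hR1 j s' hj
      · have hj' : j = W'.length := by
          have := (List.getElem?_eq_some_iff.mp hj).1
          simp only [List.length_append, List.length_singleton] at this
          omega
        subst hj'
        rw [List.getElem?_concat_length] at hj
        have hs' : s' = Step.recv u := (Option.some.inj hj).symm
        subst hs'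
        have huK : u ∈ K := hrecv W'.length u hslast
        have := hK u huK
        rw [← RHSset_append D₀ (stdOnly W') (le_refl _)] at this
        exact RHSset_mono _ (by simp) this
    | std l r =>
      have hstd : stdOnly (W' ++ [Step.std l r]) = stdOnly W' ++ [Step.std l r] := by
        simp [stdOnly, List.filter_append]
      rw [hstd, ← List.append_assoc]
      have hlhsD1 : ∀ u ∈ l, u ∈ RHSset (D₀ ++ stdOnly W') (D₀ ++ stdOnly W').length := by
        intro u hu
        obtain ⟨j, hjlt, sj, hsj, hrhs⟩ := hW.2 W'.length l r hslast u hu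
        rw [List.getElem?_append_left hjlt] at hsj
        exact hrhs ▸ hR1 j sj hsj
      have hded : IsDeduction DS (Step.std l r) := hW.1 _ hsW
      refine ⟨hD1.snoc hded ?_, ?_⟩
      · intro l' r' he u hu
        injection he with h1 h2
        subst h1; subst h2
        exact hlhsD1 u hu
      · intro j s' hj
        rcases lt_or_ge j W'.length with hjlt | hjge
        · rw [List.getElem?_append_left hjlt] at hj
          have := hR1 j s' hj
          rw [← RHSset_append (D₀ ++ stdOnly W') [Step.std l r] (le_refl _)] at this
          exact RHSset_mono _ (by simp) this
        · have hj' : j = W'.length := by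
            have := (List.getElem?_eq_some_iff.mp hj).1
            simp only [List.length_append, List.length_singleton] at this
            omega
          subst hj'
          rw [List.getElem?_concat_length] at hj
          have hs' : s' = Step.std l r := (Option.some.inj hj).symm
          subst hs'
          exact mem_RHSset List.getElem?_concat_length (by simp)

end Aux4
section Main

theorem cutoff_of_none {S : CSystem} {D : List Step} {α : ℕ → ℕ} {i : ℕ}
    (h : prevSend S i = none) : cutoff S D α i = nextRecv D 0 := by
  simp [cutoff, h]

theorem cutoff_of_some {S : CSystem} {D : List Step} {α : ℕ → ℕ} {i p : ℕ}
    (h : prevSend S i = some p) : cutoff S D α i = nextRecv D (α p + 1) := by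
  simp [cutoff, h]

theorem key (DS : DeductionSystem) (σ : Subst) :
    ∀ S : CSystem,
      (∀ (i : ℕ) (t : Term), S[i]? = some (Constraint.send t) → (t.subst σ).Ground) →
      (∀ (i : ℕ) (t : Term), S[i]? = some (Constraint.recv t) →
        t.subst σ ∈ Der DS (knowledge S σ i)) →
      ∃ (D : List Step) (α : ℕ → ℕ), IsDerivation DS D ∧ Compliant S σ D α ∧
        ∀ (i : ℕ) (t : Term), S[i]? = some (Constraint.recv t) →
          ∃ j < cutoff S D α i, ∃ s, D[j]? = some s ∧ s.rhs = t.subst σ := by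
  intro S
  induction S using List.reverseRecOn with
  | nil =>
    intro _ _
    exact ⟨[], id, ⟨by simp, by simp⟩, ⟨by intros; simp_all, by intros; simp_all,
      by intros; simp_all⟩, by intros; simp_all⟩
  | append_singleton S' c ih =>
    intro hsend hrecv
    have hS'idx : ∀ (j : ℕ) (c' : Constraint), S'[j]? = some c' → (S' ++ [c])[j]? = some c' := by
      intro j c' hj
      rwa [List.getElem?_append_left (List.getElem?_eq_some_iff.mp hj).1]
    have hidxS' : ∀ (j : ℕ) (c' : Constraint), j < S'.length →
        (S' ++ [c])[j]? = some c' → S'[j]? = some c' := by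
      intro j c' hj h
      rwa [List.getElem?_append_left hj] at h
    have hlast : (S' ++ [c])[S'.length]? = some c := List.getElem?_concat_length
    have hbnd : ∀ (j : ℕ) (c' : Constraint), (S' ++ [c])[j]? = some c' → j < S'.length + 1 := by
      intro j c' h
      have := (List.getElem?_eq_some_iff.mp h).1
      simpa using this
    have hsend' : ∀ (i : ℕ) (t : Term), S'[i]? = some (Constraint.send t) → (t.subst σ).Ground :=
      fun i t h => hsend i t (hS'idx i _ h)
    have hknow : ∀ i : ℕ, i < S'.length → knowledge (S' ++ [c]) σ i = knowledge S' σ i := by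
      intro i hi
      ext u
      constructor <;> rintro ⟨j, hji, t, hjt, rfl⟩
      · exact ⟨j, hji, t, hidxS' j _ (by omega) hjt, rfl⟩
      · exact ⟨j, hji, t, hS'idx j _ hjt, rfl⟩
    have hrecv' : ∀ (i : ℕ) (t : Term), S'[i]? = some (Constraint.recv t) →
        t.subst σ ∈ Der DS (knowledge S' σ i) := by
      intro i t h
      have hi : i < S'.length := (List.getElem?_eq_some_iff.mp h).1
      rw [← hknow i hi]
      exact hrecv i t (hS'idx i _ h)
    obtain ⟨D', α, hder, hcomp, hproved⟩ := ih hsend' hrecv'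
    have halt : ∀ (i : ℕ) (t : Term), S'[i]? = some (Constraint.send t) → α i < D'.length :=
      fun i t h => (List.getElem?_eq_some_iff.mp (hcomp.maps i t h)).1
    -- cutoff monotonicity for old receive constraints, for D' extended by E
    have hcut : ∀ (E : List Step) (i : ℕ), i < S'.length →
        cutoff S' D' α i ≤ cutoff (S' ++ [c]) (D' ++ E) α i := by
      intro E i hi
      cases hp : prevSend S' i with
      | none =>
        rw [cutoff_of_none hp, cutoff_of_none (by rw [prevSend_append c hi]; exact hp)]
        exact nextRecv_append_le D' E 0
      | some p =>
        rw [cutoff_of_some hp, cutoff_of_some (by rw [prevSend_append c hi]; exact hp)]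
        exact nextRecv_append_le D' E (α p + 1)
    cases c with
    | neg t =>
      have hsendS : ∀ (i : ℕ) (t' : Term), (S' ++ [Constraint.neg t])[i]? = some (Constraint.send t') →
          i < S'.length ∧ S'[i]? = some (Constraint.send t') := by
        intro i t' h
        have hb := hbnd i _ h
        rcases Nat.lt_or_ge i S'.length with hlt | hge
        · exact ⟨hlt, hidxS' i _ hlt h⟩
        · have : i = S'.length := by omega
          subst this
          rw [hlast] at h
          cases h
      refine ⟨D', α, hder, ⟨?_, ?_, ?_⟩, ?_⟩
      · intro i j ti tj hi hj hij
        exact hcomp.mono i j ti tj (hsendS i ti hi).2 (hsendS j tj hj).2 hij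
      · intro i t' hi
        exact hcomp.maps i t' (hsendS i t' hi).2
      · intro j u hj
        obtain ⟨i, t', hi, hαi⟩ := hcomp.surj j u hj
        exact ⟨i, t', hS'idx i _ hi, hαi⟩
      · intro i t' hi
        have hb := hbnd i _ hi
        rcases Nat.lt_or_ge i S'.length with hlt | hge
        · have hi' := hidxS' i _ hlt hi
          obtain ⟨j, hjc, s, hjs, hrhs⟩ := hproved i t' hi'
          have := hcut [] i hlt
          rw [List.append_nil] at this
          exact ⟨j, lt_of_lt_of_le hjc this, s, hjs, hrhs⟩
        · have : i = S'.length := by omega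
          subst this
          rw [hlast] at hi
          cases hi
    | send t =>
      set D : List Step := D' ++ [Step.recv (t.subst σ)] with hD
      set α' : ℕ → ℕ := fun i => if i = S'.length then D'.length else α i with hα'
      have hα'old : ∀ i, i < S'.length → α' i = α i := by
        intro i hi; simp only [hα']; rw [if_neg (by omega)]
      have hground : (t.subst σ).Ground := hsend S'.length t hlast
      have hDder : IsDerivation DS D := by
        refine hder.snoc ?_ ?_
        · exact hground
        · intro l r he; cases he
      refine ⟨D, α', hDder, ⟨?_, ?_, ?_⟩, ?_⟩
      · -- mono
        intro i j ti tj hi hj hij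
        have hbj := hbnd j _ hj
        rcases Nat.lt_or_ge j S'.length with hjlt | hjge
        · have hilt : i < S'.length := by omega
          rw [hα'old i hilt, hα'old j hjlt]
          exact hcomp.mono i j ti tj (hidxS' i _ hilt hi) (hidxS' j _ hjlt hj) hij
        · have hj' : j = S'.length := by omega
          subst hj'
          have hilt : i < S'.length := by omega
          rw [hα'old i hilt]
          simp only [hα', if_pos rfl]
          exact halt i ti (hidxS' i _ hilt hi)
      · -- maps
        intro i t' hi
        have hb := hbnd i _ hi
        rcases Nat.lt_or_ge i S'.length with hlt | hge
        · have hi' := hidxS' i _ hlt hi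
          rw [hα'old i hlt, hD, List.getElem?_append_left (halt i t' hi')]
          exact hcomp.maps i t' hi'
        · have : i = S'.length := by omega
          subst this
          rw [hlast] at hi
          have ht' : t' = t := by cases hi; rfl
          subst ht'
          simp only [hα', if_pos rfl, hD]
          exact List.getElem?_concat_length
      · -- surj
        intro j u hj
        rcases Nat.lt_or_ge j D'.length with hjlt | hjge
        · rw [hD, List.getElem?_append_left hjlt] at hj
          obtain ⟨i, t', hi, hαi⟩ := hcomp.surj j u hj
          have hilt : i < S'.length := (List.getElem?_eq_some_iff.mp hi).1
          exact ⟨i, t', hS'idx i _ hi, by rw [hα'old i hilt]; exact hαi⟩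
        · have hjlen : j < D'.length + 1 := by
            have := (List.getElem?_eq_some_iff.mp hj).1
            simp only [hD, List.length_append, List.length_singleton] at this
            omega
          have hj' : j = D'.length := by omega
          subst hj'
          exact ⟨S'.length, t, hlast, by simp [hα']⟩
      · -- recv_proved
        intro i t' hi
        have hb := hbnd i _ hi
        rcases Nat.lt_or_ge i S'.length with hlt | hge
        · have hi' := hidxS' i _ hlt hi
          obtain ⟨j, hjc, s, hjs, hrhs⟩ := hproved i t' hi'
          have hcc : cutoff S' D' α i ≤ cutoff (S' ++ [Constraint.send t]) D α' i := by
            have h1 := hcut [Step.recv (t.subst σ)] i hlt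
            have h2 : cutoff (S' ++ [Constraint.send t]) D α i =
                cutoff (S' ++ [Constraint.send t]) D α' i := by
              cases hp : prevSend (S' ++ [Constraint.send t]) i with
              | none => rw [cutoff_of_none hp, cutoff_of_none hp]
              | some p =>
                rw [cutoff_of_some hp, cutoff_of_some hp]
                have hpS' : prevSend S' i = some p := by rwa [prevSend_append _ hlt] at hp
                obtain ⟨hpi, _, _⟩ := prevSend_spec hpS'
                rw [hα'old p (by omega)]
            rw [← h2]
            exact h1
          have hcle : cutoff S' D' α i ≤ D'.length := by
            cases hp : prevSend S' i with
            | none => rw [cutoff_of_none hp]; exact nextRecv_le D' 0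
            | some p => rw [cutoff_of_some hp]; exact nextRecv_le D' _
          have hjlt : j < D'.length := lt_of_lt_of_le hjc hcle
          refine ⟨j, lt_of_lt_of_le hjc hcc, s, ?_, hrhs⟩
          rw [hD, List.getElem?_append_left hjlt]
          exact hjs
        · have : i = S'.length := by omega
          subst this
          rw [hlast] at hi
          cases hi
    | recv t =>
      set S : CSystem := S' ++ [Constraint.recv t] with hS
      have hsendS : ∀ (i : ℕ) (t' : Term), S[i]? = some (Constraint.send t') →
          i < S'.length ∧ S'[i]? = some (Constraint.send t') := by
        intro i t' h
        have hb := hbnd i _ h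
        rcases Nat.lt_or_ge i S'.length with hlt | hge
        · exact ⟨hlt, hidxS' i _ hlt h⟩
        · have : i = S'.length := by omega
          subst this
          rw [hlast] at h
          cases h
      -- the knowledge is available in D'
      have hK : ∀ u ∈ knowledge S σ S'.length, u ∈ RHSset D' D'.length := by
        rintro u ⟨j, hji, t', hjt, rfl⟩
        have hjne : j ≠ S'.length := by
          intro h; subst h; rw [hlast] at hjt; cases hjt
        have hjlt : j < S'.length := by
          have := hbnd j _ hjt; omega
        have hj' : S'[j]? = some (Constraint.send t') := hidxS' j _ hjlt hjt
        have := hcomp.maps j t' hj'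
        have hrhs : (Step.recv (t'.subst σ)).rhs = t'.subst σ := rfl
        exact hrhs ▸ mem_RHSset this (halt j t' hj')
      obtain ⟨W, hWder, hWrecv, l, hWlast⟩ := hrecv S'.length t hlast
      have hWK : ∀ (j : ℕ) (u : Term), W[j]? = some (Step.recv u) → u ∈ knowledge S σ S'.length :=
        hWrecv
      obtain ⟨hDder, hR⟩ := graft DS D' (knowledge S σ S'.length) hK hder W hWder hWK
      set D : List Step := D' ++ stdOnly W with hD
      -- receptions of D come from D'
      have hDrecv : ∀ (j : ℕ) (u : Term), D[j]? = some (Step.recv u) →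
          j < D'.length ∧ D'[j]? = some (Step.recv u) := by
        intro j u hj
        rcases Nat.lt_or_ge j D'.length with hjlt | hjge
        · rw [hD, List.getElem?_append_left hjlt] at hj
          exact ⟨hjlt, hj⟩
        · rw [hD, List.getElem?_append_right hjge] at hj
          exact absurd hj stdOnly_no_recv
      refine ⟨D, α, hDder, ⟨?_, ?_, ?_⟩, ?_⟩
      · intro i j ti tj hi hj hij
        exact hcomp.mono i j ti tj (hsendS i ti hi).2 (hsendS j tj hj).2 hij
      · intro i t' hi
        have hi' := (hsendS i t' hi).2
        rw [hD, List.getElem?_append_left (halt i t' hi')]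
        exact hcomp.maps i t' hi'
      · intro j u hj
        obtain ⟨hjlt, hj'⟩ := hDrecv j u hj
        obtain ⟨i, t', hi, hαi⟩ := hcomp.surj j u hj'
        exact ⟨i, t', hS'idx i _ hi, hαi⟩
      · -- recv_proved
        intro i t' hi
        have hb := hbnd i _ hi
        rcases Nat.lt_or_ge i S'.length with hlt | hge
        · have hi' := hidxS' i _ hlt hi
          obtain ⟨j, hjc, s, hjs, hrhs⟩ := hproved i t' hi'
          have hcle : cutoff S' D' α i ≤ D'.length := by
            cases hp : prevSend S' i with
            | none => rw [cutoff_of_none hp]; exact nextRecv_le D' 0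
            | some p => rw [cutoff_of_some hp]; exact nextRecv_le D' _
          have hjlt : j < D'.length := lt_of_lt_of_le hjc hcle
          refine ⟨j, lt_of_lt_of_le hjc (hcut (stdOnly W) i hlt), s, ?_, hrhs⟩
          rw [hD, List.getElem?_append_left hjlt]
          exact hjs
        · have hieq : i = S'.length := by omega
          subst hieq
          rw [hlast] at hi
          have ht' : t' = t := (Constraint.recv.inj (Option.some.inj hi)).symm
          rw [ht']
          -- the last step of W derives t σ
          have hWne : W ≠ [] := by
            intro h; rw [h] at hWlast; cases hWlast
          have hWlast' : W[W.length - 1]? = some (Step.std l (t.subst σ)) := by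
            rwa [List.getLast?_eq_getElem?] at hWlast
          have htσ : (Step.std l (t.subst σ)).rhs ∈ RHSset D D.length :=
            hR (W.length - 1) _ hWlast'
          obtain ⟨j, hjD, s, hjs, hrhs⟩ := htσ
          -- cutoff is the length of D
          have hnone : ∀ (k : ℕ), (∀ (j : ℕ) (u : Term), k ≤ j → D[j]? = some (Step.recv u) →
              False) → nextRecv D k = D.length := fun k h => nextRecv_eq_length h
          have hcutD : cutoff S D α S'.length = D.length := by
            cases hp : prevSend S S'.length with
            | none =>
              rw [cutoff_of_none hp]
              refine hnone 0 ?_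
              intro j u _ hj
              obtain ⟨hjlt, hj'⟩ := hDrecv j u hj
              obtain ⟨i', t'', hi', _⟩ := hcomp.surj j u hj'
              have hi'lt : i' < S'.length := (List.getElem?_eq_some_iff.mp hi').1
              obtain ⟨p, hps⟩ := prevSend_of_send (i := S'.length) (hS'idx i' _ hi') (by omega)
              rw [hps] at hp
              cases hp
            | some p =>
              rw [cutoff_of_some hp]
              obtain ⟨hpi, ⟨tp, hptp⟩, hpmax⟩ := prevSend_spec hp
              have hpne : p ≠ S'.length := by
                intro h; subst h; rw [hlast] at hptp; cases hptp
              have hplt : p < S'.length := by omega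
              have hpS' : S'[p]? = some (Constraint.send tp) := hidxS' p _ hplt hptp
              refine hnone (α p + 1) ?_
              intro j u hjge hj
              obtain ⟨hjlt, hj'⟩ := hDrecv j u hj
              obtain ⟨i', t'', hi', hαi'⟩ := hcomp.surj j u hj'
              have hi'lt : i' < S'.length := (List.getElem?_eq_some_iff.mp hi').1
              have hi'S : S[i']? = some (Constraint.send t'') := hS'idx i' _ hi'
              have hi'p : i' ≤ p := hpmax i' (by omega) t'' hi'S
              rcases Nat.lt_or_ge i' p with hlt' | hge'
              · have := hcomp.mono i' p t'' tp hi' hpS' hlt'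
                omega
              · have : i' = p := by omega
                subst this
                omega
          rw [hcutD]
          exact ⟨j, hjD, s, hjs, hrhs⟩

end Main
/-- Every solution of a constraint system has a proof. -/
theorem solution_has_proof (DS : DeductionSystem) (S : CSystem) (hS : IsCS S)
    (σ : Subst) (hsol : IsSolution DS S σ) :
    ∃ (D : List Step) (α : ℕ → ℕ), IsProof DS S σ D α := by
  have hsend : ∀ (i : ℕ) (t : Term), S[i]? = some (Constraint.send t) → (t.subst σ).Ground := by
    intro i t hi
    apply ground_subst σ hsol.ground
    intro y hy
    rw [hsol.dom_eq]
    have hmem : Constraint.send t ∈ S := by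
      obtain ⟨hlt, heq⟩ := List.getElem?_eq_some_iff.mp hi
      exact heq ▸ List.getElem_mem hlt
    exact ⟨t, ⟨Constraint.send t, hmem, rfl⟩, hy⟩
  obtain ⟨D, α, hder, hcomp, hproved⟩ := key DS σ S hsend hsol.recv_mem
  exact ⟨D, α, hder, hcomp, hproved, hsol.neg_not_mem⟩
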